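/- arXiv:1612.04638 — 2 statements merged into one kernel-verified Lean document; each statement's English description precedes it below -/
import Mathlib

section
/- Let g be a constant real symmetric invertible 3×3 matrix, φ, ψ : U → ℝ smooth on an open set U ⊆ ℝ³ with ∇φ × ∇ψ ≠ 0 on U; set Z0 := ∇φ × ∇ψ, Z1 := g⁻¹∇φ, Z2 := g⁻¹∇ψ, X := (∇_{Z0}Z0(ψ))·Z1 − (∇_{Z0}Z0(φ))·Z2, and (assuming ∇_{Z0}Z0(φ) is nowhere zero on U) A := ½ g(Z0,Z0)/∇_{Z0}Z0(φ). Suppose a, b : U → ℝ are smooth with [X, Z1] = a·X + b·Z1 on U. Let ρ : U → ℝ be smooth and nowhere zero and set X̃ := ρ²·X (which equals the X built from Z̃0 := ρZ0) and Ã := A. Then [X̃, Z1] = (a − Z1(ρ²)/ρ²)·X̃ + (ρ²b)·Z1, and X̃(Ã) + (ρ²b)·Ã = ρ²·(X(A) + b·A). -/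
noncomputable section

/-- Partial derivative `∂f/∂xⁱ` at `p`. -/
def pd (i : Fin 3) (f : (Fin 3 → ℝ) → ℝ) (p : Fin 3 → ℝ) : ℝ :=
  fderiv ℝ f p (Pi.single i 1)

/-- Gradient of a scalar function. -/
def grad (f : (Fin 3 → ℝ) → ℝ) (p : Fin 3 → ℝ) : Fin 3 → ℝ :=
  fun i => pd i f p

/-- Directional derivative `Σᵢ vⁱ ∂f/∂xⁱ` of `f` along the vector `v` at `p`. -/
def dd (v : Fin 3 → ℝ) (f : (Fin 3 → ℝ) → ℝ) (p : Fin 3 → ℝ) : ℝ :=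
  ∑ i, v i * pd i f p

/-- `(∇_W W)ⁱ = Σⱼ Wʲ ∂Wⁱ/∂xʲ`. -/
def nab (W : (Fin 3 → ℝ) → (Fin 3 → ℝ)) (p : Fin 3 → ℝ) : Fin 3 → ℝ :=
  fun i => ∑ j, W p j * pd j (fun q => W q i) p

/-- Euclidean cross product on `ℝ³`. -/
def cross (a b : Fin 3 → ℝ) : Fin 3 → ℝ :=
  ![a 1 * b 2 - a 2 * b 1, a 2 * b 0 - a 0 * b 2, a 0 * b 1 - a 1 * b 0]

/-- `g(v,w) = Σᵢⱼ gᵢⱼ vⁱ wʲ`. -/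
def gB (g : Matrix (Fin 3) (Fin 3) ℝ) (v w : Fin 3 → ℝ) : ℝ :=
  ∑ i, ∑ j, g i j * v i * w j

/-- Lie bracket of vector fields: `[V,W]ⁱ = Σⱼ (Vʲ ∂Wⁱ/∂xʲ − Wʲ ∂Vⁱ/∂xʲ)`. -/
def lieB (V W : (Fin 3 → ℝ) → (Fin 3 → ℝ)) (p : Fin 3 → ℝ) : Fin 3 → ℝ :=
  fun i => ∑ j, (V p j * pd j (fun q => W q i) p - W p j * pd j (fun q => V q i) p)

/-- curl of a vector field on `ℝ³`. -/
def curl (a : (Fin 3 → ℝ) → (Fin 3 → ℝ)) (p : Fin 3 → ℝ) : Fin 3 → ℝ :=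
  ![pd 1 (fun q => a q 2) p - pd 2 (fun q => a q 1) p,
    pd 2 (fun q => a q 0) p - pd 0 (fun q => a q 2) p,
    pd 0 (fun q => a q 1) p - pd 1 (fun q => a q 0) p]

/-- divergence of a vector field. -/
def divg (W : (Fin 3 → ℝ) → (Fin 3 → ℝ)) (p : Fin 3 → ℝ) : ℝ :=
  ∑ i, pd i (fun q => W q i) p

/-- Euclidean inner product on `ℝ³`. -/
def ip (a b : Fin 3 → ℝ) : ℝ := ∑ i, a i * b i

set_option linter.unusedVariables false

lemma pd_smooth {U : Set (Fin 3 → ℝ)} (hU : IsOpen U) {f : (Fin 3 → ℝ) → ℝ}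
    (hf : ContDiffOn ℝ (⊤ : ℕ∞) f U) (i : Fin 3) :
    ContDiffOn ℝ (⊤ : ℕ∞) (fun p => pd i f p) U := by
  have h : ContDiffOn ℝ (⊤ : ℕ∞) (fun p => fderiv ℝ f p) U :=
    hf.fderiv_of_isOpen hU (by exact_mod_cast le_top)
  exact h.clm_apply contDiffOn_const

lemma pd_mul {f g : (Fin 3 → ℝ) → ℝ} {p : Fin 3 → ℝ}
    (hf : DifferentiableAt ℝ f p) (hg : DifferentiableAt ℝ g p) (j : Fin 3) :
    pd j (fun q => f q * g q) p = pd j f p * g p + f p * pd j g p := by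
  unfold pd
  rw [fderiv_fun_mul hf hg]
  simp [ContinuousLinearMap.add_apply, ContinuousLinearMap.smul_apply, smul_eq_mul]
  ring

set_option maxHeartbeats 1000000 in


/-- rescaling does not affect the vanishing of `X(A) + b·A` (Section 4):
with `X̃ = ρ²·X` one has `[X̃,Z1] = (a − Z1(ρ²)/ρ²)·X̃ + (ρ²b)·Z1` and
`X̃(Ã) + (ρ²b)·Ã = ρ²·(X(A) + b·A)`. -/
theorem rescaling_bracket_invariance
    (g : Matrix (Fin 3) (Fin 3) ℝ) (hsym : g.IsSymm) (hinv : IsUnit g.det)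
    (U : Set (Fin 3 → ℝ)) (hU : IsOpen U)
    (φ ψ : (Fin 3 → ℝ) → ℝ)
    (hφ : ContDiffOn ℝ (⊤ : ℕ∞) φ U) (hψ : ContDiffOn ℝ (⊤ : ℕ∞) ψ U)
    (hind : ∀ p ∈ U, cross (grad φ p) (grad ψ p) ≠ 0)
    (Z0 Z1 Z2 X : (Fin 3 → ℝ) → (Fin 3 → ℝ))
    (hZ0 : Z0 = fun p => cross (grad φ p) (grad ψ p))
    (hZ1 : Z1 = fun p => g⁻¹.mulVec (grad φ p))
    (hZ2 : Z2 = fun p => g⁻¹.mulVec (grad ψ p))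
    (hX : X = fun p => dd (nab Z0 p) ψ p • Z1 p - dd (nab Z0 p) φ p • Z2 p)
    (hD : ∀ p ∈ U, dd (nab Z0 p) φ p ≠ 0)
    (A : (Fin 3 → ℝ) → ℝ)
    (hA : A = fun p => 1/2 * gB g (Z0 p) (Z0 p) / dd (nab Z0 p) φ p)
    (a b : (Fin 3 → ℝ) → ℝ)
    (ha : ContDiffOn ℝ (⊤ : ℕ∞) a U) (hb : ContDiffOn ℝ (⊤ : ℕ∞) b U)
    (hbr : ∀ p ∈ U, lieB X Z1 p = a p • X p + b p • Z1 p)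
    (ρ : (Fin 3 → ℝ) → ℝ) (hρ : ContDiffOn ℝ (⊤ : ℕ∞) ρ U)
    (hρnz : ∀ p ∈ U, ρ p ≠ 0)
    (Xt : (Fin 3 → ℝ) → (Fin 3 → ℝ)) (hXt : Xt = fun p => ρ p ^ 2 • X p)
    (p : Fin 3 → ℝ) (hp : p ∈ U) :
    lieB Xt Z1 p
        = (a p - dd (Z1 p) (fun q => ρ q ^ 2) p / ρ p ^ 2) • Xt p
          + (ρ p ^ 2 * b p) • Z1 p ∧
    dd (Xt p) A p + (ρ p ^ 2 * b p) * A p = ρ p ^ 2 * (dd (X p) A p + b p * A p) := by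
  
  subst hZ0 hZ1 hZ2 hX hXt
  set Z0 : (Fin 3 → ℝ) → (Fin 3 → ℝ) := fun p => cross (grad φ p) (grad ψ p) with hZ0
  set Z1 : (Fin 3 → ℝ) → (Fin 3 → ℝ) := fun p => g⁻¹.mulVec (grad φ p) with hZ1
  set Z2 : (Fin 3 → ℝ) → (Fin 3 → ℝ) := fun p => g⁻¹.mulVec (grad ψ p) with hZ2
  set X : (Fin 3 → ℝ) → (Fin 3 → ℝ) :=
    fun p => dd (nab Z0 p) ψ p • Z1 p - dd (nab Z0 p) φ p • Z2 p with hX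
  have spdφ : ∀ i, ContDiffOn ℝ (⊤ : ℕ∞) (fun q => pd i φ q) U := pd_smooth hU hφ
  have spdψ : ∀ i, ContDiffOn ℝ (⊤ : ℕ∞) (fun q => pd i ψ q) U := pd_smooth hU hψ
  have sZ0 : ∀ i, ContDiffOn ℝ (⊤ : ℕ∞) (fun q => Z0 q i) U := by
    intro i
    fin_cases i <;>
      simp only [hZ0, cross, grad, Matrix.cons_val_zero, Matrix.cons_val_one,
        Matrix.head_cons, Matrix.cons_val_two, Matrix.tail_cons, Fin.isValue]
    · exact ((spdφ 1).mul (spdψ 2)).sub ((spdφ 2).mul (spdψ 1))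
    · exact ((spdφ 2).mul (spdψ 0)).sub ((spdφ 0).mul (spdψ 2))
    · exact ((spdφ 0).mul (spdψ 1)).sub ((spdφ 1).mul (spdψ 0))
  have snab : ∀ i, ContDiffOn ℝ (⊤ : ℕ∞) (fun q => nab Z0 q i) U := by
    intro i
    simp only [nab]
    exact ContDiffOn.sum fun j _ => (sZ0 j).mul (pd_smooth hU (sZ0 i) j)
  have sDψ : ContDiffOn ℝ (⊤ : ℕ∞) (fun q => dd (nab Z0 q) ψ q) U := by
    simp only [dd]
    exact ContDiffOn.sum fun i _ => (snab i).mul (spdψ i)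
  have sDφ : ContDiffOn ℝ (⊤ : ℕ∞) (fun q => dd (nab Z0 q) φ q) U := by
    simp only [dd]
    exact ContDiffOn.sum fun i _ => (snab i).mul (spdφ i)
  have sZ1 : ∀ i, ContDiffOn ℝ (⊤ : ℕ∞) (fun q => Z1 q i) U := by
    intro i
    simp only [hZ1, Matrix.mulVec, dotProduct, grad]
    exact ContDiffOn.sum fun k _ => contDiffOn_const.mul (spdφ k)
  have sZ2 : ∀ i, ContDiffOn ℝ (⊤ : ℕ∞) (fun q => Z2 q i) U := by
    intro i
    simp only [hZ2, Matrix.mulVec, dotProduct, grad]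
    exact ContDiffOn.sum fun k _ => contDiffOn_const.mul (spdψ k)
  have sX : ∀ i, ContDiffOn ℝ (⊤ : ℕ∞) (fun q => X q i) U := by
    intro i
    simp only [hX, Pi.sub_apply, Pi.smul_apply, smul_eq_mul]
    exact (sDψ.mul (sZ1 i)).sub (sDφ.mul (sZ2 i))
  have dX : ∀ i, DifferentiableAt ℝ (fun q => X q i) p := fun i =>
    ((sX i).contDiffAt (hU.mem_nhds hp)).differentiableAt (by simp)
  have dρ2 : DifferentiableAt ℝ (fun q => ρ q ^ 2) p :=
    ((hρ.contDiffAt (hU.mem_nhds hp)).differentiableAt (by simp)).pow 2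
  have key : ∀ j i, pd j (fun q => ρ q ^ 2 * X q i) p
      = pd j (fun q => ρ q ^ 2) p * X p i + ρ p ^ 2 * pd j (fun q => X q i) p :=
    fun j i => pd_mul dρ2 (dX i) j
  have hρ2ne : ρ p ^ 2 ≠ 0 := pow_ne_zero 2 (hρnz p hp)
  have hbri : ∀ i, (∑ j, (X p j * pd j (fun q => Z1 q i) p
        - Z1 p j * pd j (fun q => X q i) p)) = a p * X p i + b p * Z1 p i := by
    intro i
    have := congrFun (hbr p hp) i
    simpa [lieB, Pi.add_apply, Pi.smul_apply, smul_eq_mul] using this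
  constructor
  · funext i
    simp only [lieB, Pi.smul_apply, smul_eq_mul, Pi.add_apply, dd]
    rw [show (∑ j, (ρ p ^ 2 * X p j * pd j (fun q => Z1 q i) p
        - Z1 p j * pd j (fun q => ρ q ^ 2 * X q i) p))
      = ∑ j, (ρ p ^ 2 * (X p j * pd j (fun q => Z1 q i) p
        - Z1 p j * pd j (fun q => X q i) p)
        - (Z1 p j * pd j (fun q => ρ q ^ 2) p) * X p i) from by
      refine Finset.sum_congr rfl fun j _ => ?_
      rw [key j i]
      ring]
    rw [Finset.sum_sub_distrib, ← Finset.mul_sum, hbri i, ← Finset.sum_mul]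
    have hρne := hρnz p hp
    field_simp
    ring
  · simp only [dd, Pi.smul_apply, smul_eq_mul]
    rw [show (∑ i, ρ p ^ 2 * X p i * pd i A p)
      = ρ p ^ 2 * ∑ i, X p i * pd i A p from by
        rw [Finset.mul_sum]; exact Finset.sum_congr rfl fun i _ => by ring]
    ring
end
end

section
/- Let g be a constant real symmetric invertible 3×3 matrix with g₁₃ = 0 and g₂₃ = g₃₃. On U := {(x,y,z) ∈ ℝ³ : y ≠ 0}, let φ := x/y, ψ := y + z, and define the vector fields Z1' := (g₁₂x + (g₂₂−g₃₃)y) ∂/∂x − (g₁₁x + g₁₂y) ∂/∂y + (g₁₁x + g₁₂y) ∂/∂z and Z2' := ∂/∂z. Then: (i) [Z1', Z2'] = 0 on U; (ii) at each point of U, g·Z1' is a scalar multiple of ∇φ and g·Z2' is a scalar multiple of ∇ψ; (iii) for any smooth F : ℝ → ℝ, the function V := F(g₁₁x² + (g₂₂−g₃₃)y² + 2g₁₂xy) satisfies Z1'(V) = 0 and Z2'(V) = 0 on U. -/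
noncomputable section

set_option linter.unusedVariables false

abbrev prj (i : Fin 3) : (Fin 3 → ℝ) →L[ℝ] ℝ := ContinuousLinearMap.proj i

lemma hasFDerivAt_coord (i : Fin 3) (p : Fin 3 → ℝ) :
    HasFDerivAt (fun q : Fin 3 → ℝ => q i) (prj i) p :=
  (prj i).hasFDerivAt

lemma pd_of_hasFDerivAt {f : (Fin 3 → ℝ) → ℝ} {f' : (Fin 3 → ℝ) →L[ℝ] ℝ}
    {p : Fin 3 → ℝ} (h : HasFDerivAt f f' p) (i : Fin 3) :
    pd i f p = f' (Pi.single i 1) := by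
  rw [pd, h.fderiv]

lemma hasFDerivAt_lin (a b : ℝ) (p : Fin 3 → ℝ) :
    HasFDerivAt (fun q : Fin 3 → ℝ => a * q 0 + b * q 1)
      (a • prj 0 + b • prj 1) p :=
  (((hasFDerivAt_coord 0 p).const_mul a).add ((hasFDerivAt_coord 1 p).const_mul b))

lemma pd_lin (a b : ℝ) (p : Fin 3 → ℝ) (i : Fin 3) :
    pd i (fun q : Fin 3 → ℝ => a * q 0 + b * q 1) p
      = a * (Pi.single i 1 : Fin 3 → ℝ) 0 + b * (Pi.single i 1 : Fin 3 → ℝ) 1 := by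
  rw [pd_of_hasFDerivAt (hasFDerivAt_lin a b p)]
  simp [smul_eq_mul]

lemma pd_lin_neg (a b : ℝ) (p : Fin 3 → ℝ) (i : Fin 3) :
    pd i (fun q : Fin 3 → ℝ => -(a * q 0 + b * q 1)) p
      = -(a * (Pi.single i 1 : Fin 3 → ℝ) 0 + b * (Pi.single i 1 : Fin 3 → ℝ) 1) := by
  rw [pd_of_hasFDerivAt (hasFDerivAt_lin a b p).fun_neg]
  simp [smul_eq_mul]

lemma pd_const (c : ℝ) (p : Fin 3 → ℝ) (i : Fin 3) :
    pd i (fun _ : Fin 3 → ℝ => c) p = 0 := by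
  simp [pd]
lemma pd_lin' (a b : ℝ) (p : Fin 3 → ℝ) (i : Fin 3) :
    pd i (fun q : Fin 3 → ℝ => -(a * q 1) + -(b * q 0)) p
      = -(a * (Pi.single i 1 : Fin 3 → ℝ) 1) + -(b * (Pi.single i 1 : Fin 3 → ℝ) 0) := by
  rw [pd_of_hasFDerivAt ((((hasFDerivAt_coord 1 p).const_mul a).fun_neg).fun_add
    (((hasFDerivAt_coord 0 p).const_mul b).fun_neg))]
  simp [smul_eq_mul]
/-- Example 2: for `φ = x/y`, `ψ = y+z` on `y ≠ 0`, and a constant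
symmetric invertible `g` with `g₁₃ = 0`, `g₂₃ = g₃₃`:
(i) `[Z1',Z2'] = 0`; (ii) `g·Z1' ∥ ∇φ` and `g·Z2' ∥ ∇ψ` pointwise;
(iii) any `V = F(g₁₁x² + (g₂₂−g₃₃)y² + 2g₁₂xy)` satisfies `Z1'(V) = Z2'(V) = 0`. -/
theorem example2_case0a
    (g : Matrix (Fin 3) (Fin 3) ℝ) (hsym : g.IsSymm) (hinv : IsUnit g.det)
    (h13 : g 0 2 = 0) (h2333 : g 1 2 = g 2 2)
    (U : Set (Fin 3 → ℝ)) (hU : U = {p | p 1 ≠ 0})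
    (φ ψ : (Fin 3 → ℝ) → ℝ)
    (hφ : φ = fun p => p 0 / p 1) (hψ : ψ = fun p => p 1 + p 2)
    (Z1' Z2' : (Fin 3 → ℝ) → (Fin 3 → ℝ))
    (hZ1' : Z1' = fun p => ![g 0 1 * p 0 + (g 1 1 - g 2 2) * p 1,
                            -(g 0 0 * p 0 + g 0 1 * p 1),
                            g 0 0 * p 0 + g 0 1 * p 1])
    (hZ2' : Z2' = fun _ => ![0, 0, 1]) :
    (∀ p ∈ U, lieB Z1' Z2' p = 0) ∧
    (∀ p ∈ U, (∃ c : ℝ, g.mulVec (Z1' p) = c • grad φ p) ∧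
              (∃ c : ℝ, g.mulVec (Z2' p) = c • grad ψ p)) ∧
    (∀ F : ℝ → ℝ, ContDiff ℝ (⊤ : ℕ∞) F → ∀ p ∈ U,
      dd (Z1' p) (fun q => F (g 0 0 * q 0 ^ 2 + (g 1 1 - g 2 2) * q 1 ^ 2
                              + 2 * g 0 1 * q 0 * q 1)) p = 0 ∧
      dd (Z2' p) (fun q => F (g 0 0 * q 0 ^ 2 + (g 1 1 - g 2 2) * q 1 ^ 2
                              + 2 * g 0 1 * q 0 * q 1)) p = 0) := by
  subst hU hφ hψ hZ1' hZ2'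
  have h10 : g 1 0 = g 0 1 := hsym.apply 0 1
  have h20 : g 2 0 = 0 := by rw [hsym.apply 0 2]; exact h13
  have h21 : g 2 1 = g 2 2 := by rw [hsym.apply 1 2]; exact h2333
  refine ⟨?_, ?_, ?_⟩
  · intro p hp
    funext i
    fin_cases i <;>
      simp [lieB, Fin.sum_univ_three, pd_lin, pd_lin_neg, pd_lin', pd_const,
        Pi.single_apply]
  · intro p hp
    simp only [Set.mem_setOf_eq] at hp
    have hinv1 : HasFDerivAt (fun q : Fin 3 → ℝ => (q 1)⁻¹)
        ((-((p 1)^2)⁻¹) • prj 1) p :=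
      (hasDerivAt_inv hp).comp_hasFDerivAt p (hasFDerivAt_coord 1 p)
    have hmul := (hasFDerivAt_coord 0 p).fun_mul hinv1
    have hφd : HasFDerivAt (fun q : Fin 3 → ℝ => q 0 / q 1)
        ((p 0) • ((-((p 1)^2)⁻¹) • prj 1) + (p 1)⁻¹ • prj 0) p := by
      simpa [div_eq_mul_inv] using hmul
    have hψd : HasFDerivAt (fun q : Fin 3 → ℝ => q 1 + q 2)
        (prj 1 + prj 2) p :=
      (hasFDerivAt_coord 1 p).add (hasFDerivAt_coord 2 p)
    constructor
    · refine ⟨(g 0 0 * (g 1 1 - g 2 2) - g 0 1 ^ 2) * (p 1) ^ 2, ?_⟩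
      funext i
      fin_cases i <;>
      · simp [Matrix.mulVec, dotProduct, Fin.sum_univ_three, grad,
          pd_of_hasFDerivAt hφd, h10, h20, h21, h13, h2333, Pi.single_apply]
        try field_simp
        try ring
    · refine ⟨g 2 2, ?_⟩
      funext i
      fin_cases i <;>
        simp [Matrix.mulVec, dotProduct, Fin.sum_univ_three, grad,
          pd_of_hasFDerivAt hψd, h10, h20, h21, h13, h2333, Pi.single_apply]
  · intro F hF p hp
    have hS : HasFDerivAt
        (fun q : Fin 3 → ℝ => g 0 0 * q 0 ^ 2 + (g 1 1 - g 2 2) * q 1 ^ 2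
          + 2 * g 0 1 * q 0 * q 1)
        ((((g 0 0) • ((p 0 + p 0) • prj 0))
          + ((g 1 1 - g 2 2) • ((p 1 + p 1) • prj 1)))
          + ((2 * g 0 1 * p 0) • prj 1 + (p 1) • ((2 * g 0 1) • prj 0))) p := by
      have h0 := (hasFDerivAt_coord 0 p).fun_mul (hasFDerivAt_coord 0 p)
      have h1 := (hasFDerivAt_coord 1 p).fun_mul (hasFDerivAt_coord 1 p)
      have h := (((h0.const_mul (g 0 0)).fun_add
        (h1.const_mul (g 1 1 - g 2 2))).fun_add
        (((hasFDerivAt_coord 0 p).const_mul (2 * g 0 1)).fun_mul (hasFDerivAt_coord 1 p)))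
      have heq : ∀ x : ℝ, x • prj 0 + x • prj 0 = (x + x) • prj 0 := by
        intro x; rw [add_smul]
      simp only [pow_two]
      exact h.congr_fderiv (by module)
    have hFd : HasDerivAt F (deriv F (g 0 0 * p 0 ^ 2 + (g 1 1 - g 2 2) * p 1 ^ 2
          + 2 * g 0 1 * p 0 * p 1)) _ :=
      (hF.differentiable (by simp) _).hasDerivAt
    have hcomp := hFd.comp_hasFDerivAt p hS
    simp only [Function.comp_def] at hcomp
    constructor <;>
    · rw [dd, Fin.sum_univ_three,
        pd_of_hasFDerivAt hcomp 0, pd_of_hasFDerivAt hcomp 1,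
        pd_of_hasFDerivAt hcomp 2]
      simp [Pi.single_apply]
      try ring
end
end
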